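/- For all nonnegative integers a, b, n with a + b ≤ n and n ≥ 1, the quantity ψ(n,a,b) := n^{−1} · ∑_{j=a+1}^{a+b} (n − 1 + κ_{j−1} + κ_{n−j} − κ_n) · (b − 1 + κ_{j−1−a} + κ_{b+a−j} − κ_b) is nonnegative: ψ(n,a,b) ≥ 0. -/
import Mathlib

open Finset Filter Topology

/-- The `n`-th harmonic number `H_n = ∑_{i=1}^n 1/i`. -/
noncomputable def H (n : ℕ) : ℝ := ∑ i ∈ Finset.range n, (1 : ℝ) / (i + 1)

/-- `κ_n = 2(n+1)H_n - 4n`, the mean number of key comparisons for QuickSort on `n` keys. -/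
noncomputable def κ (n : ℕ) : ℝ := 2 * (n + 1) * H n - 4 * n

noncomputable def fψ (n j : ℕ) : ℝ := (n : ℝ) - 1 + κ (j - 1) + κ (n - j) - κ n

noncomputable def Gψ (b i : ℕ) : ℝ := ∑ k ∈ Finset.range i, fψ b (k + 1)

lemma H_succ (m : ℕ) : H (m + 1) = H m + 1 / (m + 1) := by
  simp [H, Finset.sum_range_succ]

lemma H_mono : Monotone H := by
  apply monotone_nat_of_le_succ
  intro m
  rw [H_succ]
  have : (0:ℝ) ≤ 1 / ((m:ℝ) + 1) := by positivity
  linarith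

lemma κ_succ (m : ℕ) : κ (m + 1) = κ m + 2 * H (m + 1) - 2 := by
  have h1 : ((m:ℝ) + 1) ≠ 0 := by positivity
  simp only [κ, H_succ]
  push_cast
  field_simp
  ring

lemma fψ_step {n j : ℕ} (hj : 1 ≤ j) (hjn : j + 1 ≤ n) :
    fψ n (j + 1) = fψ n j + 2 * (H j - H (n - j)) := by
  obtain ⟨j', rfl⟩ : ∃ j', j = j' + 1 := ⟨j - 1, by omega⟩
  obtain ⟨d, rfl⟩ : ∃ d, n = j' + 2 + d := ⟨n - (j' + 2), by omega⟩
  have e1 : j' + 1 + 1 - 1 = j' + 1 := by omega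
  have e2 : j' + 2 + d - (j' + 1 + 1) = d := by omega
  have e3 : j' + 1 - 1 = j' := by omega
  have e4 : j' + 2 + d - (j' + 1) = d + 1 := by omega
  simp only [fψ, e1, e2, e3, e4]
  rw [κ_succ j', κ_succ d]
  ring

lemma fψ_symm {b j : ℕ} (hj : 1 ≤ j) (hjb : j ≤ b) : fψ b j = fψ b (b + 1 - j) := by
  have e1 : b + 1 - j - 1 = b - j := by omega
  have e2 : b - (b + 1 - j) = j - 1 := by omega
  simp only [fψ, e1, e2]
  try ring

lemma κ_rec (b : ℕ) : (b : ℝ) * κ b = b * (b - 1) + 2 * ∑ k ∈ Finset.range b, κ k := by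
  induction b with
  | zero => simp [κ, H]
  | succ b ih =>
      rw [Finset.sum_range_succ, κ_succ b]
      have hκ : κ b = 2 * ((b:ℝ) + 1) * H b - 4 * b := rfl
      have hH : H (b + 1) = H b + 1 / ((b:ℝ) + 1) := by
        rw [H_succ]
      have h1 : ((b:ℝ) + 1) ≠ 0 := by positivity
      push_cast
      rw [hH]
      field_simp
      nlinarith [ih, hκ]

lemma sum_fψ_eq_zero (b : ℕ) : ∑ k ∈ Finset.range b, fψ b (k + 1) = 0 := by
  have h1 : ∑ k ∈ Finset.range b, κ (b - (k + 1)) = ∑ k ∈ Finset.range b, κ k := by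
    rw [← Finset.sum_range_reflect]
    apply Finset.sum_congr rfl
    intro k hk
    simp only [Finset.mem_range] at hk
    congr 1
    omega
  have h2 : ∀ k ∈ Finset.range b, fψ b (k + 1) =
      ((b:ℝ) - 1 - κ b) + κ k + κ (b - (k + 1)) := by
    intro k hk
    simp only [fψ]
    have : k + 1 - 1 = k := by omega
    rw [this]
    ring
  rw [Finset.sum_congr rfl h2]
  rw [Finset.sum_add_distrib, Finset.sum_add_distrib, h1, Finset.sum_const, Finset.card_range,
    nsmul_eq_mul]
  have := κ_rec b
  linarith [this]

lemma Gψ_antisymm {b i : ℕ} (hib : i ≤ b) : Gψ b (b - i) = - Gψ b i := by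
  have key : Gψ b (b - i) + Gψ b i = 0 := by
    have hsplit : ∑ k ∈ Finset.range b, fψ b (k + 1) =
        (∑ k ∈ Finset.range (b - i), fψ b (k + 1)) +
          ∑ k ∈ Finset.range i, fψ b ((b - i) + k + 1) := by
      have e : b - i + i = b := by omega
      have hs := Finset.sum_range_add (fun k => fψ b (k + 1)) (b - i) i
      rw [e] at hs
      simpa [Nat.add_assoc] using hs
    have hrefl : ∑ k ∈ Finset.range i, fψ b ((b - i) + k + 1) =
        ∑ k ∈ Finset.range i, fψ b (k + 1) := by
      rw [← Finset.sum_range_reflect]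
      apply Finset.sum_congr rfl
      intro k hk
      simp only [Finset.mem_range] at hk
      rw [fψ_symm (j := (b - i) + (i - 1 - k) + 1) (by omega) (by omega)]
      congr 1
      omega
    have h0 := sum_fψ_eq_zero b
    rw [hsplit, hrefl] at h0
    simpa [Gψ] using h0
  linarith [key]

lemma H_diff_ineq (m : ℕ) : 1 ≤ H (2*m+2) + H (2*m+3) - 2*H (m+1) := by
  induction m with
  | zero => norm_num [H, Finset.sum_range_succ]
  | succ m ih =>
      have g1 : 2*(m+1)+2 = 2*m+4 := by omega
      have g2 : 2*(m+1)+3 = 2*m+5 := by omega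
      have g3 : m+1+1 = m+2 := by omega
      rw [g1, g2, g3]
      have b1 := H_succ (2*m+2)
      rw [show 2*m+2+1 = 2*m+3 from by omega] at b1
      push_cast at b1
      have b2 := H_succ (2*m+3)
      rw [show 2*m+3+1 = 2*m+4 from by omega] at b2
      push_cast at b2
      have b3 := H_succ (2*m+4)
      rw [show 2*m+4+1 = 2*m+5 from by omega] at b3
      push_cast at b3
      have b4 := H_succ (m+1)
      rw [show m+1+1 = m+2 from by omega] at b4
      push_cast at b4
      have hx1 : (0:ℝ) < 2*(m:ℝ)+3 := by positivity
      have hx2 : (0:ℝ) < 2*(m:ℝ)+4 := by positivity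
      have hx3 : (0:ℝ) < 2*(m:ℝ)+5 := by positivity
      have hx4 : (0:ℝ) < (m:ℝ)+2 := by positivity
      have key : 1/(2*(m:ℝ)+3) + 1/(2*(m:ℝ)+5) - 1/((m:ℝ)+2)
          = 1/((2*(m:ℝ)+3)*(2*(m:ℝ)+5)*((m:ℝ)+2)) := by
        field_simp
        ring
      have key2 : (0:ℝ) ≤ 1/((2*(m:ℝ)+3)*(2*(m:ℝ)+5)*((m:ℝ)+2)) := by positivity
      have hdup : ((2:ℝ)+(m:ℝ))⁻¹ = 2*((4:ℝ)+(m:ℝ)*2)⁻¹ := by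
        rw [eq_div_iff (by positivity)] at *
        · field_simp
          ring
      ring_nf at ih b1 b2 b3 b4 key key2 hdup ⊢
      linarith [hdup, ih, key, key2, b1, b2, b3, b4]

lemma mid_ineq (m : ℕ) : 2*(m:ℝ) + 2*κ m ≤ κ (2*m+1) := by
  induction m with
  | zero => norm_num [κ, H, Finset.sum_range_succ]
  | succ m ih =>
      have c0 := κ_succ m
      have c1 := κ_succ (2*m+1)
      rw [show 2*m+1+1 = 2*m+2 from by omega] at c1
      have c2 := κ_succ (2*m+2)
      rw [show 2*m+2+1 = 2*m+3 from by omega] at c2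
      rw [show 2*(m+1)+1 = 2*m+3 from by omega, c2, c1, c0]
      have hd := H_diff_ineq m
      push_cast
      linarith [hd, ih]

lemma fψ_mid (m : ℕ) : fψ (2*m+1) (m+1) ≤ 0 := by
  have e1 : m+1-1 = m := by omega
  have e2 : 2*m+1-(m+1) = m := by omega
  simp only [fψ, e1, e2]
  have := mid_ineq m
  push_cast
  linarith

lemma fψ_dec {b k : ℕ} (hk : 1 ≤ k) (h2k : 2*k ≤ b) : fψ b (k+1) ≤ fψ b k := by
  rw [fψ_step hk (by omega : k+1 ≤ b)]
  have : H k ≤ H (b-k) := H_mono (by omega)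
  linarith

lemma fψ_anti (b k : ℕ) (hk : 1 ≤ k) :
    ∀ l, k ≤ l → 2*l ≤ b+2 → fψ b l ≤ fψ b k := by
  intro l
  induction l with
  | zero => intro h1 _; omega
  | succ l ih =>
      intro hkl hl
      rcases Nat.lt_or_ge k (l+1) with hlt | hge
      · have hkl' : k ≤ l := by omega
        have h1 : fψ b (l+1) ≤ fψ b l := fψ_dec (by omega) (by omega)
        have h2 : fψ b l ≤ fψ b k := ih hkl' (by omega)
        linarith
      · have : k = l + 1 := by omega
        rw [this]

lemma Gψ_succ (b i : ℕ) : Gψ b (i+1) = Gψ b i + fψ b (i+1) := by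
  simp [Gψ, Finset.sum_range_succ]

lemma Gψ_half_nonneg {b i : ℕ} (hi : 1 ≤ i) (h2i : 2*i ≤ b) : 0 ≤ Gψ b i := by
  set m := b / 2 with hm
  have him : i ≤ m := by omega
  have hGm : 0 ≤ Gψ b m := by
    rcases Nat.even_or_odd b with ⟨t, ht⟩ | ⟨t, ht⟩
    · have hmt : m = t := by omega
      have h1 := Gψ_antisymm (b := b) (i := t) (by omega)
      have h2 : b - t = t := by omega
      rw [h2] at h1
      rw [hmt]
      linarith
    · have hmt : m = t := by omega
      have h1 := Gψ_antisymm (b := b) (i := t) (by omega)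
      have h2 : b - t = t + 1 := by omega
      rw [h2, Gψ_succ] at h1
      have h3 : fψ b (t+1) ≤ 0 := by
        have := fψ_mid t
        have : b = 2*t+1 := by omega
        rw [this]
        exact fψ_mid t
      rw [hmt]
      linarith
  rcases Nat.eq_or_lt_of_le him with heq | hlt
  · rw [heq]; exact hGm
  · -- chord argument
    set x := fψ b (i+1) with hx
    have h2m : 2*m ≤ b := by omega
    have hlow : (i:ℝ) * x ≤ Gψ b i := by
      have : ∀ k ∈ Finset.range i, x ≤ fψ b (k+1) := by
        intro k hk
        simp only [Finset.mem_range] at hk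
        exact fψ_anti b (k+1) (by omega) (i+1) (by omega) (by omega)
      have := Finset.card_nsmul_le_sum (Finset.range i) (fun k => fψ b (k+1)) x this
      simpa [Gψ, nsmul_eq_mul] using this
    have hsplit : Gψ b m = Gψ b i + ∑ k ∈ Finset.range (m-i), fψ b (i+k+1) := by
      have e : i + (m-i) = m := by omega
      have hs := Finset.sum_range_add (fun k => fψ b (k+1)) i (m-i)
      rw [e] at hs
      simpa [Gψ, Nat.add_assoc] using hs
    have hupp : ∑ k ∈ Finset.range (m-i), fψ b (i+k+1) ≤ ((m-i : ℕ):ℝ) * x := by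
      have : ∀ k ∈ Finset.range (m-i), fψ b (i+k+1) ≤ x := by
        intro k hk
        simp only [Finset.mem_range] at hk
        exact fψ_anti b (i+1) (by omega) (i+k+1) (by omega) (by omega)
      have := Finset.sum_le_card_nsmul (Finset.range (m-i)) (fun k => fψ b (i+k+1)) x this
      simpa [nsmul_eq_mul] using this
    have hc : (0:ℝ) ≤ ((m-i : ℕ):ℝ) := by positivity
    have hipos : (0:ℝ) < (i:ℝ) := by exact_mod_cast hi
    have h2 : Gψ b m ≤ Gψ b i + ((m-i : ℕ):ℝ) * x := by
      rw [hsplit]; linarith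
    nlinarith [mul_nonneg (le_of_lt hipos) hGm,
      mul_le_mul_of_nonneg_left h2 (le_of_lt hipos),
      mul_le_mul_of_nonneg_left hlow hc]

theorem psi_nonneg (a b n : ℕ) (h : a + b ≤ n) (hn : 1 ≤ n) :
    0 ≤ (n : ℝ)⁻¹ * ∑ j ∈ Finset.Icc (a + 1) (a + b),
      ((n : ℝ) - 1 + κ (j - 1) + κ (n - j) - κ n) *
        ((b : ℝ) - 1 + κ (j - 1 - a) + κ (b + a - j) - κ b) := by
  have hsum : (∑ j ∈ Finset.Icc (a+1) (a+b),
      ((n : ℝ) - 1 + κ (j - 1) + κ (n - j) - κ n) *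
        ((b : ℝ) - 1 + κ (j - 1 - a) + κ (b + a - j) - κ b))
      = ∑ i ∈ Finset.range b, fψ n (a+1+i) * fψ b (i+1) := by
    rw [← Finset.Ico_add_one_right_eq_Icc, Finset.sum_Ico_eq_sum_range]
    rw [show a + b + 1 - (a+1) = b from by omega]
    apply Finset.sum_congr rfl
    intro i hi
    simp only [Finset.mem_range] at hi
    have e2 : a+1+i-1-a = i := by omega
    have e3 : b+a-(a+1+i) = b-(i+1) := by omega
    have e4 : i+1-1 = i := by omega
    simp only [fψ, e2, e3, e4]
  rw [hsum]
  rcases Nat.eq_zero_or_pos b with hb | hb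
  · subst hb; simp
  set T : ℕ → ℝ := fun i => 2*(H (n-(a+(i+1))) - H (a+(i+1))) * Gψ b (i+1) with hT
  have hS : ∑ i ∈ Finset.range b, fψ n (a+1+i) * fψ b (i+1)
      = ∑ i ∈ Finset.range (b-1), T i := by
    have habel := Finset.sum_range_by_parts (fun i => fψ n (a+1+i)) (fun i => fψ b (i+1)) b
    simp only [smul_eq_mul] at habel
    rw [sum_fψ_eq_zero b, mul_zero, zero_sub] at habel
    rw [habel, ← Finset.sum_neg_distrib]
    apply Finset.sum_congr rfl
    intro i hi
    simp only [Finset.mem_range] at hi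
    have hstep : fψ n ((a+1+i)+1) = fψ n (a+1+i) + 2*(H (a+1+i) - H (n-(a+1+i))) :=
      fψ_step (by omega) (by omega)
    have e7 : a+1+(i+1) = (a+1+i)+1 := by omega
    have e8 : a+1+i = a+(i+1) := by omega
    have hg : ∑ j ∈ Finset.range (i+1), fψ b (j+1) = Gψ b (i+1) := rfl
    simp only [e7, hg, hT]
    rw [hstep, e8]
    ring
  rw [hS]
  have key : ∀ i ∈ Finset.range (b-1), 0 ≤ T i + T (b-1-1-i) := by
    intro i hi
    simp only [Finset.mem_range] at hi
    have e5 : a+(b-1-1-i+1) = a+(b-(i+1)) := by omega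
    have e6 : b-1-1-i+1 = b-(i+1) := by omega
    simp only [hT]
    rw [e6, Gψ_antisymm (show i+1 ≤ b by omega)]
    rcases lt_trichotomy (2*(i+1)) b with hlt | heq | hgt
    · have hG : 0 ≤ Gψ b (i+1) := Gψ_half_nonneg (by omega) (by omega)
      have h1 : H (n-(a+(b-(i+1)))) ≤ H (n-(a+(i+1))) :=
        H_mono (Nat.sub_le_sub_left (by omega) n)
      have h2 : H (a+(i+1)) ≤ H (a+(b-(i+1))) := H_mono (by omega)
      nlinarith [hG, h1, h2]
    · have h0 := Gψ_antisymm (show i+1 ≤ b by omega)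
      rw [show b-(i+1) = i+1 from by omega] at h0
      have hz : Gψ b (i+1) = 0 := by linarith
      rw [hz]
      simp
    · have hG' : 0 ≤ Gψ b (b-(i+1)) := Gψ_half_nonneg (by omega) (by omega)
      have hGk : Gψ b (i+1) = -Gψ b (b-(i+1)) := by
        have h9 := Gψ_antisymm (show b-(i+1) ≤ b by omega)
        rw [show b-(b-(i+1)) = i+1 from by omega] at h9
        linarith
      have h1 : H (n-(a+(i+1))) ≤ H (n-(a+(b-(i+1)))) :=
        H_mono (Nat.sub_le_sub_left (by omega) n)
      have h2 : H (a+(b-(i+1))) ≤ H (a+(i+1)) := H_mono (by omega)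
      rw [hGk]
      nlinarith [hG', h1, h2]
  have hrefl := Finset.sum_range_reflect T (b-1)
  have hpos : 0 ≤ ∑ i ∈ Finset.range (b-1), (T i + T (b-1-1-i)) :=
    Finset.sum_nonneg key
  rw [Finset.sum_add_distrib, hrefl] at hpos
  have hfin : 0 ≤ ∑ i ∈ Finset.range (b-1), T i := by linarith
  have hninv : (0:ℝ) ≤ (n:ℝ)⁻¹ := by positivity
  exact mul_nonneg hninv hfin
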